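/- Let c₃ > 0 and c₄ = 1/c₃, and let w : ℝ² → ℝ be differentiable with ∂w/∂x(x,y) = w(x,y) + c₄·e^{y−x} and ∂w/∂y(x,y) = w(x,y) + c₃·e^{x−y} for all (x,y) ∈ ℝ². Then there exists a constant η ∈ ℝ such that w(x,y) = −cosh(y − x − log c₃) + η·e^{x+y} for all (x,y) ∈ ℝ². -/

import Mathlib

/-- Solving the linear first-order system `∂w/∂x = w + c₄ e^{y−x}`, `∂w/∂y = w + c₃ e^{x−y}`
with `c₄ = 1/c₃`: `w(x,y) = −cosh(y − x − log c₃) + η e^{x+y}` for some constant `η`. -/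
theorem linear_system_cosh_neg (c₃ c₄ : ℝ) (hc₃ : 0 < c₃) (hc₄ : c₄ = 1 / c₃)
    (w : ℝ × ℝ → ℝ) (hdiff : Differentiable ℝ w)
    (hx : ∀ x y : ℝ, deriv (fun t => w (t, y)) x = w (x, y) + c₄ * Real.exp (y - x))
    (hy : ∀ x y : ℝ, deriv (fun s => w (x, s)) y = w (x, y) + c₃ * Real.exp (x - y)) :
    ∃ η : ℝ, ∀ x y : ℝ,
      w (x, y) = -Real.cosh (y - x - Real.log c₃) + η * Real.exp (x + y) := by
  set L := Real.log c₃ with hL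
  have hexpL : Real.exp L = c₃ := Real.exp_log hc₃
  set u : ℝ × ℝ → ℝ := fun p => w p + Real.cosh (p.2 - p.1 - L) with hu
  have key1 : ∀ x y : ℝ, c₄ * Real.exp (y - x)
      = Real.cosh (y - x - L) + Real.sinh (y - x - L) := by
    intro x y
    rw [Real.cosh_add_sinh, hc₄,
      show Real.exp (y - x - L) = Real.exp (y - x) / c₃ from by rw [Real.exp_sub, hexpL]]
    ring
  have key2 : ∀ x y : ℝ, c₃ * Real.exp (x - y)
      = Real.cosh (y - x - L) - Real.sinh (y - x - L) := by
    intro x y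
    rw [Real.cosh_sub_sinh,
      show Real.exp (-(y - x - L)) = Real.exp (x - y) * c₃ from by
        rw [show -(y - x - L) = (x - y) + L by ring, Real.exp_add, hexpL]]
    ring
  have hwxd : ∀ y : ℝ, Differentiable ℝ (fun t => w (t, y)) := fun y =>
    hdiff.comp (differentiable_id.prodMk (differentiable_const y))
  have hwyd : ∀ x : ℝ, Differentiable ℝ (fun s => w (x, s)) := fun x =>
    hdiff.comp ((differentiable_const x).prodMk differentiable_id)
  have hux : ∀ x y : ℝ, HasDerivAt (fun t => u (t, y)) (u (x, y)) x := by
    intro x y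
    have h1 : HasDerivAt (fun t => w (t, y)) (w (x, y) + c₄ * Real.exp (y - x)) x := by
      have := ((hwxd y) x).hasDerivAt
      rwa [hx x y] at this
    have h2 : HasDerivAt (fun t : ℝ => y - t - L) (-1) x := by
      simpa using ((hasDerivAt_id x).const_sub y).sub_const L
    have h3 : HasDerivAt (fun t => Real.cosh (y - t - L)) (Real.sinh (y - x - L) * (-1)) x :=
      (Real.hasDerivAt_cosh _).comp x h2
    have h4 := h1.add h3
    refine h4.congr_deriv ?_
    simp only [hu]
    rw [key1 x y]
    ring
  have huy : ∀ x y : ℝ, HasDerivAt (fun s => u (x, s)) (u (x, y)) y := by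
    intro x y
    have h1 : HasDerivAt (fun s => w (x, s)) (w (x, y) + c₃ * Real.exp (x - y)) y := by
      have := ((hwyd x) y).hasDerivAt
      rwa [hy x y] at this
    have h2 : HasDerivAt (fun s : ℝ => s - x - L) 1 y := by
      simpa using ((hasDerivAt_id y).sub_const x).sub_const L
    have h3 : HasDerivAt (fun s => Real.cosh (s - x - L)) (Real.sinh (y - x - L) * 1) y :=
      (Real.hasDerivAt_cosh _).comp y h2
    have h4 := h1.add h3
    refine h4.congr_deriv ?_
    simp only [hu]
    rw [key2 x y]
    ring
  have hexpneg : ∀ t : ℝ, HasDerivAt (fun s : ℝ => Real.exp (-s)) (Real.exp (-t) * (-1)) t :=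
    fun t => (Real.hasDerivAt_exp (-t)).comp t (by simpa using hasDerivAt_neg t)
  have hX : ∀ x y : ℝ, u (x, y) = u (0, y) * Real.exp x := by
    intro x y
    have hf : ∀ t : ℝ, HasDerivAt (fun t => u (t, y) * Real.exp (-t)) 0 t := by
      intro t
      have := (hux t y).mul (hexpneg t)
      refine this.congr_deriv ?_
      ring
    have hconst := is_const_of_deriv_eq_zero (f := fun t => u (t, y) * Real.exp (-t))
      (fun t => (hf t).differentiableAt) (fun t => (hf t).deriv) x 0
    simp only [neg_zero, Real.exp_zero, mul_one] at hconst
    rw [Real.exp_neg] at hconst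
    field_simp at hconst
    linarith [hconst]
  have hY : ∀ y : ℝ, u (0, y) = u (0, 0) * Real.exp y := by
    intro y
    have hf : ∀ t : ℝ, HasDerivAt (fun t => u (0, t) * Real.exp (-t)) 0 t := by
      intro t
      have := (huy 0 t).mul (hexpneg t)
      refine this.congr_deriv ?_
      ring
    have hconst := is_const_of_deriv_eq_zero (f := fun t => u (0, t) * Real.exp (-t))
      (fun t => (hf t).differentiableAt) (fun t => (hf t).deriv) y 0
    simp only [neg_zero, Real.exp_zero, mul_one] at hconst
    rw [Real.exp_neg] at hconst
    field_simp at hconst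
    linarith [hconst]
  refine ⟨u (0, 0), fun x y => ?_⟩
  have h1 := hX x y
  have h2 := hY y
  have : u (x, y) = u (0, 0) * Real.exp (x + y) := by
    rw [h1, h2, Real.exp_add]; ring
  have h3 : u (x, y) = w (x, y) + Real.cosh (y - x - L) := rfl
  linarith [this, h3]
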